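/- Every non-trivial congruence on the semigroup I^cf_λ is a group congruence: if C is a congruence on I^cf_λ distinct from the identity congruence and from the universal congruence, then the quotient semigroup I^cf_λ/C is a group. -/

import Mathlib

open Function Set

namespace IcfPaper

variable {ι : Type*}

lemma trans_none_finite {f g : ι ≃. ι}
    (hf : {a | f a = none}.Finite) (hg : {b | g b = none}.Finite) :
    {a | (f.trans g) a = none}.Finite := by
  have hsub : {a | (f.trans g) a = none} ⊆
      {a | f a = none} ∪ ⋃ b ∈ {b | g b = none}, {a | f.symm b = some a} := by
    intro a ha
    simp only [Set.mem_setOf_eq] at ha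
    rcases hfa : f a with _ | b
    · exact Or.inl hfa
    · have hg' : g b = none := by
        have : (f.trans g) a = (f a).bind g := rfl
        rw [this, hfa, Option.bind_some] at ha
        exact ha
      refine Or.inr ?_
      refine Set.mem_biUnion hg' ?_
      exact (PEquiv.eq_some_iff f).2 hfa
  refine Set.Finite.subset (hf.union (hg.biUnion ?_)) hsub
  intro b _
  apply Set.Subsingleton.finite
  intro a1 h1 a2 h2
  simp only [Set.mem_setOf_eq] at h1 h2
  rw [h1] at h2
  exact Option.some_injective _ h2

/-- The monoid of injective partial selfmaps of `ι` with cofinite domain and range. -/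
def Icf (ι : Type*) : Type _ :=
  {f : ι ≃. ι // {a | f a = none}.Finite ∧ {b | f.symm b = none}.Finite}

namespace Icf

instance : Monoid (Icf ι) where
  mul f g := ⟨f.1.trans g.1, trans_none_finite f.2.1 g.2.1, by
      rw [PEquiv.symm_trans_rev]
      exact trans_none_finite g.2.2 f.2.2⟩
  one := ⟨PEquiv.refl ι, by
      constructor <;>
      · convert Set.finite_empty
        ext a
        simp only [Set.mem_setOf_eq, Set.mem_empty_iff_false, iff_false]
        intro h
        simp at h⟩
  mul_assoc a b c := Subtype.ext (PEquiv.trans_assoc _ _ _)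
  one_mul a := Subtype.ext (PEquiv.refl_trans _)
  mul_one a := Subtype.ext (PEquiv.trans_refl _)

/-- The domain of an element of `Icf ι`. -/
def dom (f : Icf ι) : Set ι := {a | (f.1 a).isSome}

/-- The range of an element of `Icf ι`. -/
def ran (f : Icf ι) : Set ι := {b | (f.1.symm b).isSome}

/-- `d̄ f`, the number of points of `ι` outside of the domain of `f`. -/
noncomputable def dbar (f : Icf ι) : ℕ := (dom f)ᶜ.ncard

/-- `r̄ f`, the number of points of `ι` outside of the range of `f`. -/
noncomputable def rbar (f : Icf ι) : ℕ := (ran f)ᶜ.ncard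


end Icf


/-- The bicyclic semigroup `⟨p, q | pq = 1⟩`, realized as `ℕ × ℕ` with the operation
`(a,b)(c,d) = (a - b + max(b,c), d - c + max(b,c))`. -/
def Bicyclic : Type := ℕ × ℕ

instance : Mul Bicyclic :=
  ⟨fun x y => (x.1 - x.2 + max x.2 y.1, y.2 - y.1 + max x.2 y.1)⟩



namespace Icf

attribute [local instance] Classical.propDecidable

lemma ext' {f g : Icf ι} (h : f.1 = g.1) : f = g := Subtype.ext h

lemma mul_coe (f g : Icf ι) : (f * g).1 = f.1.trans g.1 := rfl

lemma one_coe : (1 : Icf ι).1 = PEquiv.refl ι := rfl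

lemma ofSet_irrel (s : Set ι) (h1 h2 : DecidablePred (· ∈ s)) :
    @PEquiv.ofSet ι s h1 = @PEquiv.ofSet ι s h2 := by congr!

lemma ofSet_apply_mem {s : Set ι} (inst : DecidablePred (· ∈ s)) {x : ι} (hx : x ∈ s) :
    @PEquiv.ofSet ι s inst x = some x := @PEquiv.ofSet_eq_some_self_iff ι s inst x |>.2 hx

lemma ofSet_apply_not_mem {s : Set ι} (inst : DecidablePred (· ∈ s)) {x : ι} (hx : x ∉ s) :
    @PEquiv.ofSet ι s inst x = none := by
  rcases h : @PEquiv.ofSet ι s inst x with _ | z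
  · rfl
  · obtain ⟨rfl, hz⟩ := (@PEquiv.ofSet_eq_some_iff ι s inst z x).1 h
    exact absurd hz hx

lemma trans_apply (f g : ι ≃. ι) (a : ι) : (f.trans g) a = (f a).bind g := rfl

/-- partial identity on a cofinite set -/
noncomputable def pid (s : Set ι) (hs : sᶜ.Finite) : Icf ι :=
  ⟨PEquiv.ofSet s, by
    constructor
    · refine hs.subset fun a ha => ?_
      simp only [Set.mem_setOf_eq] at ha
      by_contra h
      rw [Set.notMem_compl_iff] at h
      rw [ofSet_apply_mem _ h] at ha
      cases ha
    · refine hs.subset fun a ha => ?_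
      simp only [Set.mem_setOf_eq] at ha
      by_contra h
      rw [Set.notMem_compl_iff] at h
      have : (PEquiv.ofSet s).symm a = some a := by
        rw [PEquiv.ofSet_symm]
        exact ofSet_apply_mem _ h
      rw [this] at ha
      cases ha⟩

lemma pid_coe (s : Set ι) (hs : sᶜ.Finite) : (pid s hs).1 = PEquiv.ofSet s := rfl

lemma pid_congr {s t : Set ι} (h : s = t) (hs : sᶜ.Finite) (ht : tᶜ.Finite) :
    pid s hs = pid t ht := by subst h; rfl

lemma pid_univ (h : (Set.univ : Set ι)ᶜ.Finite) : pid Set.univ h = 1 := by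
  refine ext' ?_
  rw [pid_coe, one_coe]
  refine PEquiv.ext fun x => ?_
  rw [PEquiv.refl_apply]
  exact ofSet_apply_mem _ (Set.mem_univ x)

lemma univ_compl_finite : (Set.univ : Set ι)ᶜ.Finite := by simp

lemma inter_compl_finite {s t : Set ι} (hs : sᶜ.Finite) (ht : tᶜ.Finite) :
    (s ∩ t)ᶜ.Finite := by rw [Set.compl_inter]; exact hs.union ht

lemma ofSet_trans_ofSet (A B : Set ι) [DecidablePred (· ∈ A)] [DecidablePred (· ∈ B)]
    [DecidablePred (· ∈ A ∩ B)] :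
    (PEquiv.ofSet A).trans (PEquiv.ofSet B) = PEquiv.ofSet (A ∩ B) := by
  refine PEquiv.ext fun x => ?_
  rw [trans_apply]
  by_cases hA : x ∈ A
  · rw [ofSet_apply_mem _ hA, Option.bind_some]
    by_cases hB : x ∈ B
    · rw [ofSet_apply_mem _ hB, ofSet_apply_mem _ (Set.mem_inter hA hB)]
    · rw [ofSet_apply_not_mem _ hB, ofSet_apply_not_mem _ (fun h => hB h.2)]
  · rw [ofSet_apply_not_mem _ hA, Option.bind_none,
      ofSet_apply_not_mem _ (fun h => hA h.1)]

lemma pid_mul_pid (A B : Set ι) (hA : Aᶜ.Finite) (hB : Bᶜ.Finite) :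
    pid A hA * pid B hB = pid (A ∩ B) (inter_compl_finite hA hB) := by
  refine ext' ?_
  rw [mul_coe, pid_coe, pid_coe, pid_coe]
  exact (ofSet_trans_ofSet A B).trans (ofSet_irrel _ _ _)

lemma ofSet_trans_of {s : Set ι} (inst : DecidablePred (· ∈ s)) {f : ι ≃. ι}
    (h : ∀ x, x ∉ s → f x = none) :
    (@PEquiv.ofSet ι s inst).trans f = f := by
  refine PEquiv.ext fun x => ?_
  rw [trans_apply]
  by_cases hx : x ∈ s
  · rw [ofSet_apply_mem _ hx, Option.bind_some]
  · rw [ofSet_apply_not_mem _ hx, Option.bind_none, h x hx]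

lemma trans_ofSet_of {s : Set ι} (inst : DecidablePred (· ∈ s)) {f : ι ≃. ι}
    (h : ∀ x y, f x = some y → y ∈ s) :
    f.trans (@PEquiv.ofSet ι s inst) = f := by
  refine PEquiv.ext fun x => ?_
  rw [trans_apply]
  rcases hx : f x with _ | y
  · rfl
  · rw [Option.bind_some, ofSet_apply_mem _ (h x y hx)]

/-- The inverse (as partial bijection) of an element of `Icf`. -/
def inv (f : Icf ι) : Icf ι := ⟨f.1.symm, f.2.2, f.2.1⟩

lemma inv_coe (f : Icf ι) : (inv f).1 = f.1.symm := rfl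

/-- the domain of `f` as a set -/
def domSet (f : Icf ι) : Set ι := {a | (f.1 a).isSome}

/-- the range of `f` as a set -/
def ranSet (f : Icf ι) : Set ι := {b | (f.1.symm b).isSome}

lemma domSet_compl_finite (f : Icf ι) : (domSet f)ᶜ.Finite := by
  convert f.2.1 using 1
  ext a
  simp [domSet, Option.not_isSome_iff_eq_none]

lemma ranSet_compl_finite (f : Icf ι) : (ranSet f)ᶜ.Finite := by
  convert f.2.2 using 1
  ext a
  simp [ranSet, Option.not_isSome_iff_eq_none]

lemma mul_inv_self (f : Icf ι) : f * inv f = pid (domSet f) (domSet_compl_finite f) :=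
  ext' ((PEquiv.self_trans_symm f.1).trans (ofSet_irrel _ _ _))

lemma inv_mul_self (f : Icf ι) : inv f * f = pid (ranSet f) (ranSet_compl_finite f) :=
  ext' ((PEquiv.symm_trans_self f.1).trans (ofSet_irrel _ _ _))

lemma sandwich_eq_some {A B : Set ι} (instA : DecidablePred (· ∈ A))
    (instB : DecidablePred (· ∈ B)) {f : ι ≃. ι} {x y : ι} :
    (((@PEquiv.ofSet ι A instA).trans f).trans (@PEquiv.ofSet ι B instB)) x = some y ↔
      x ∈ A ∧ f x = some y ∧ y ∈ B := by
  rw [trans_apply, trans_apply]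
  by_cases hA : x ∈ A
  · rw [ofSet_apply_mem _ hA, Option.bind_some]
    rcases hf : f x with _ | z
    · simp only [hA, true_and]
      exact ⟨fun h => by simp at h, fun ⟨h, _⟩ => by simp at h⟩
    · rw [Option.bind_some]
      by_cases hB : z ∈ B
      · rw [ofSet_apply_mem _ hB]
        constructor
        · rintro h; cases h; exact ⟨hA, rfl, hB⟩
        · rintro ⟨_, h, _⟩; cases h; rfl
      · rw [ofSet_apply_not_mem _ hB]
        constructor
        · rintro h; cases h
        · rintro ⟨_, h, hy⟩; cases h; exact absurd hy hB
  · rw [ofSet_apply_not_mem _ hA, Option.bind_none, Option.bind_none]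
    constructor
    · rintro h; cases h
    · rintro ⟨h, _⟩; exact absurd h hA


section Congr

variable {c : Con (Icf ι)}

lemma key_ran {R : Set ι} (hR : Rᶜ.Finite) {γ : Icf ι} (h : c (pid R hR) γ)
    (hsub : ∀ x y, γ.1 x = some y → y ∈ R) :
    c (pid R hR) (pid (ranSet γ) (ranSet_compl_finite γ)) := by
  have h1 : c (pid R hR * inv γ) (γ * inv γ) := c.mul h (c.refl (inv γ))
  have e1 : pid R hR * inv γ = inv γ := by
    refine ext' ?_
    rw [mul_coe, pid_coe, inv_coe]
    refine ofSet_trans_of _ fun x hx => ?_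
    rcases hy : γ.1.symm x with _ | w
    · rfl
    · exact absurd (hsub w x ((PEquiv.eq_some_iff γ.1).1 hy)) hx
  rw [e1, mul_inv_self] at h1
  have h2 : c (inv γ * γ) (pid (domSet γ) (domSet_compl_finite γ) * γ) :=
    c.mul h1 (c.refl γ)
  have e2 : pid (domSet γ) (domSet_compl_finite γ) * γ = γ := by
    refine ext' ?_
    rw [mul_coe, pid_coe]
    refine ofSet_trans_of _ fun x hx => ?_
    rcases hy : γ.1 x with _ | w
    · rfl
    · exact absurd (by simp [domSet, hy] : x ∈ domSet γ) hx
  rw [inv_mul_self, e2] at h2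
  exact c.trans h (c.symm h2)

lemma key_dom {R : Set ι} (hR : Rᶜ.Finite) {γ : Icf ι} (h : c (pid R hR) γ)
    (hsub : ∀ x y, γ.1 x = some y → x ∈ R) :
    c (pid R hR) (pid (domSet γ) (domSet_compl_finite γ)) := by
  have h1 : c (inv γ * pid R hR) (inv γ * γ) := c.mul (c.refl (inv γ)) h
  have e1 : inv γ * pid R hR = inv γ := by
    refine ext' ?_
    rw [mul_coe, pid_coe, inv_coe]
    refine trans_ofSet_of _ fun x y hxy => ?_
    exact hsub y x ((PEquiv.eq_some_iff γ.1).1 hxy)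
  rw [e1, inv_mul_self] at h1
  have h2 : c (γ * inv γ) (γ * pid (ranSet γ) (ranSet_compl_finite γ)) :=
    c.mul (c.refl γ) h1
  have e2 : γ * pid (ranSet γ) (ranSet_compl_finite γ) = γ := by
    refine ext' ?_
    rw [mul_coe, pid_coe]
    refine trans_ofSet_of _ fun x y hxy => ?_
    have := (PEquiv.eq_some_iff γ.1).2 hxy
    simp [ranSet, this]
  rw [mul_inv_self, e2] at h2
  exact c.trans h (c.symm h2)

lemma exists_pid_pair_of_rel {α β : Icf ι} (hc : c α β)
    (hne2 : inv α * β ≠ inv α * α) :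
    ∃ (P Q : Set ι) (hP : Pᶜ.Finite) (hQ : Qᶜ.Finite),
      P ≠ Q ∧ c (pid P hP) (pid Q hQ) := by
  have hR : (ranSet α)ᶜ.Finite := ranSet_compl_finite α
  set R := ranSet α with hRdef
  set γ := inv α * β with hγdef
  have hcγ : c (pid R hR) γ := by
    have h0 := c.mul (c.refl (inv α)) hc
    rwa [inv_mul_self] at h0
  have hneγ : γ ≠ pid R hR := by
    rw [← inv_mul_self]
    exact hne2
  by_cases hB : ∀ a ∈ R, γ.1 a = some a
  · have h1 : c (pid R hR * inv γ) (γ * inv γ) := c.mul hcγ (c.refl (inv γ))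
    have e1 : pid R hR * inv γ = pid R hR := by
      refine ext' ?_
      rw [mul_coe, pid_coe, inv_coe]
      refine PEquiv.ext fun y => ?_
      rw [trans_apply]
      by_cases hy : y ∈ R
      · rw [ofSet_apply_mem _ hy, Option.bind_some]
        exact (PEquiv.eq_some_iff γ.1).2 (hB y hy)
      · rw [ofSet_apply_not_mem _ hy, Option.bind_none]
    rw [e1, mul_inv_self] at h1
    refine ⟨R, domSet γ, hR, domSet_compl_finite γ, ?_, h1⟩
    intro hEq
    apply hneγ
    refine ext' ?_
    rw [pid_coe]
    refine PEquiv.ext fun x => ?_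
    by_cases hx : x ∈ R
    · rw [ofSet_apply_mem _ hx]
      exact hB x hx
    · rw [ofSet_apply_not_mem _ hx]
      have hx' : x ∉ domSet γ := hEq ▸ hx
      rcases hv : γ.1 x with _ | v
      · rfl
      · exact absurd (by simp [domSet, hv] : x ∈ domSet γ) hx'
  · push_neg at hB
    obtain ⟨a, haR, haγ⟩ := hB
    set γt := pid R hR * γ * pid R hR with hγtdef
    have hcγt : c (pid R hR) γt := by
      have h0 : c (pid R hR * pid R hR * pid R hR) γt :=
        c.mul (c.mul (c.refl _) hcγ) (c.refl _)
      have e0 : pid R hR * pid R hR * pid R hR = pid R hR := by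
        rw [pid_mul_pid, pid_mul_pid]
        exact pid_congr (by simp) _ hR
      rwa [e0] at h0
    have fact1 : ∀ x y, γt.1 x = some y → x ∈ R ∧ γ.1 x = some y ∧ y ∈ R := by
      intro x y hxy
      rw [hγtdef, mul_coe, mul_coe, pid_coe] at hxy
      exact (sandwich_eq_some _ _).1 hxy
    have hγta : γt.1 a ≠ some a := fun h => haγ (fact1 a a h).2.1
    by_cases hA1 : ∀ x, γt.1 x ≠ some a
    · have hsub : ∀ x y, γt.1 x = some y → y ∈ R := fun x y h => (fact1 x y h).2.2
      refine ⟨R, ranSet γt, hR, ranSet_compl_finite γt, ?_, key_ran hR hcγt hsub⟩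
      intro hEq
      have ha2 : a ∈ ranSet γt := hEq ▸ haR
      rw [ranSet, Set.mem_setOf_eq, Option.isSome_iff_exists] at ha2
      obtain ⟨x, hx⟩ := ha2
      exact hA1 x ((PEquiv.eq_some_iff γt.1).1 hx)
    · push_neg at hA1
      obtain ⟨a', ha'⟩ := hA1
      have ha'ne : a' ≠ a := fun h => hγta (h ▸ ha')
      have ha'R : a' ∈ R := (fact1 a' a ha').1
      have hgc : ({a}ᶜ : Set ι)ᶜ.Finite := by simp
      have hS : (R ∩ {a}ᶜ)ᶜ.Finite := inter_compl_finite hR hgc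
      set S := R ∩ {a}ᶜ with hSdef
      set h := pid {a}ᶜ hgc * γt * pid {a}ᶜ hgc with hhdef
      have hch : c (pid S hS) h := by
        have h0 : c (pid {a}ᶜ hgc * pid R hR * pid {a}ᶜ hgc) h :=
          c.mul (c.mul (c.refl _) hcγt) (c.refl _)
        have e0 : pid {a}ᶜ hgc * pid R hR * pid {a}ᶜ hgc = pid S hS := by
          rw [pid_mul_pid, pid_mul_pid]
          refine pid_congr ?_ _ hS
          rw [hSdef]
          ext z
          constructor
          · rintro ⟨⟨hz1, hz2⟩, _⟩
            exact ⟨hz2, hz1⟩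
          · rintro ⟨hz1, hz2⟩
            exact ⟨⟨hz2, hz1⟩, hz2⟩
        rwa [e0] at h0
      have hsub : ∀ x y, h.1 x = some y → x ∈ S := by
        intro x y hxy
        rw [hhdef, mul_coe, mul_coe, pid_coe] at hxy
        obtain ⟨hx1, hx2, _⟩ := (sandwich_eq_some _ _).1 hxy
        exact ⟨(fact1 x y hx2).1, hx1⟩
      refine ⟨S, domSet h, hS, domSet_compl_finite h, ?_, key_dom hS hch hsub⟩
      intro hEq
      have ha'S : a' ∈ S := ⟨ha'R, ha'ne⟩
      have hd : a' ∈ domSet h := hEq ▸ ha'S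
      rw [domSet, Set.mem_setOf_eq, Option.isSome_iff_exists] at hd
      obtain ⟨y, hy⟩ := hd
      rw [hhdef, mul_coe, mul_coe, pid_coe] at hy
      obtain ⟨_, hy2, hy3⟩ := (sandwich_eq_some _ _).1 hy
      rw [ha'] at hy2
      cases hy2
      exact hy3 rfl

lemma exists_pid_pair (hne_id : ∃ α β : Icf ι, c α β ∧ α ≠ β) :
    ∃ (P Q : Set ι) (hP : Pᶜ.Finite) (hQ : Qᶜ.Finite),
      P ≠ Q ∧ c (pid P hP) (pid Q hQ) := by
  obtain ⟨α, β, hc, hne⟩ := hne_id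
  by_cases h1 : inv α * β = inv α * α
  · by_cases h2 : inv β * α = inv β * β
    · exfalso
      apply hne
      have claim1 : ∀ x y, α.1 x = some y → β.1 x = some y := by
        intro x y hxy
        have hy : (inv α * β).1 y = (inv α * α).1 y := by rw [h1]
        rw [mul_coe, inv_coe, trans_apply, mul_coe, inv_coe, trans_apply,
          (PEquiv.eq_some_iff α.1).2 hxy, Option.bind_some, Option.bind_some] at hy
        rw [hy, hxy]
      have claim2 : ∀ x y, β.1 x = some y → α.1 x = some y := by
        intro x y hxy
        have hy : (inv β * α).1 y = (inv β * β).1 y := by rw [h2]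
        rw [mul_coe, inv_coe, trans_apply, mul_coe, inv_coe, trans_apply,
          (PEquiv.eq_some_iff β.1).2 hxy, Option.bind_some, Option.bind_some] at hy
        rw [hy, hxy]
      refine ext' (PEquiv.ext fun x => ?_)
      rcases h : α.1 x with _ | y
      · rcases h' : β.1 x with _ | z
        · rfl
        · rw [claim2 x z h'] at h
          cases h
      · rw [claim1 x y h]
    · exact exists_pid_pair_of_rel (c.symm hc) h2
  · exact exists_pid_pair_of_rel hc h1

lemma step2aux {P Q : Set ι} {hP : Pᶜ.Finite} {hQ : Qᶜ.Finite}
    (hc : c (pid P hP) (pid Q hQ)) {p : ι} (hp : p ∈ P) (hpQ : p ∉ Q) :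
    ∃ (M : Set ι) (p' : ι) (hM : Mᶜ.Finite) (hMp : (M ∪ {p'})ᶜ.Finite),
      p' ∉ M ∧ c (pid (M ∪ {p'}) hMp) (pid M hM) := by
  have hM : (P ∩ Q)ᶜ.Finite := inter_compl_finite hP hQ
  set M := P ∩ Q with hMdef
  have hMp : (M ∪ {p})ᶜ.Finite := by
    rw [Set.compl_union]
    exact hM.subset Set.inter_subset_left
  set g := pid (M ∪ {p}) hMp with hgdef
  have h0 : c (g * pid P hP * g) (g * pid Q hQ * g) :=
    c.mul (c.mul (c.refl g) hc) (c.refl g)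
  have hsubP : M ∪ {p} ⊆ P :=
    Set.union_subset Set.inter_subset_left (by simpa using hp)
  have e1 : g * pid P hP * g = pid (M ∪ {p}) hMp := by
    rw [hgdef, pid_mul_pid, pid_mul_pid]
    refine pid_congr ?_ _ hMp
    rw [Set.inter_eq_left.2 hsubP, Set.inter_self]
  have e2 : g * pid Q hQ * g = pid M hM := by
    rw [hgdef, pid_mul_pid, pid_mul_pid]
    refine pid_congr ?_ _ hM
    have : (M ∪ {p}) ∩ Q = M := by
      ext z
      constructor
      · rintro ⟨hz | hz, hzQ⟩
        · exact hz
        · exact absurd hzQ (by simpa using hz ▸ hpQ)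
      · rintro ⟨hz1, hz2⟩
        exact ⟨Or.inl ⟨hz1, hz2⟩, hz2⟩
    rw [this, Set.inter_eq_left.2 Set.subset_union_left]
  rw [e1, e2] at h0
  exact ⟨M, p, hM, hMp, fun h => hpQ h.2, h0⟩

lemma exists_pid_insert (hne_id : ∃ α β : Icf ι, c α β ∧ α ≠ β) :
    ∃ (M : Set ι) (p' : ι) (hM : Mᶜ.Finite) (hMp : (M ∪ {p'})ᶜ.Finite),
      p' ∉ M ∧ c (pid (M ∪ {p'}) hMp) (pid M hM) := by
  obtain ⟨P, Q, hP, hQ, hPQ, hrel⟩ := exists_pid_pair hne_id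
  by_cases hsub : P ⊆ Q
  · have : ¬ Q ⊆ P := fun h => hPQ (Set.Subset.antisymm hsub h)
    obtain ⟨p, hp, hpP⟩ := Set.not_subset.1 this
    exact step2aux (c.symm hrel) hp hpP
  · obtain ⟨p, hp, hpQ⟩ := Set.not_subset.1 hsub
    exact step2aux hrel hp hpQ

lemma exists_equiv_of_cofinite [Infinite ι] (s : Set ι) (hs : sᶜ.Finite) :
    Nonempty (ι ≃ ↥s) := by
  have hsi : s.Infinite := by
    have := hs.infinite_compl
    rwa [compl_compl] at this
  haveI := hsi.to_subtype
  have h1 : (Cardinal.aleph0 : Cardinal) ≤ Cardinal.mk ↥s := Cardinal.aleph0_le_mk ↥s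
  have h2 : Cardinal.mk ↥(sᶜ) ≤ Cardinal.mk ↥s := le_trans (le_of_lt hs.lt_aleph0) h1
  have h3 := Cardinal.mk_sum_compl s
  rw [Cardinal.add_eq_left h1 h2] at h3
  exact Cardinal.eq.1 h3.symm

/-- a total injection of `ι` onto a cofinite subset `s`, as an element of `Icf`. -/
noncomputable def emb (s : Set ι) (hs : sᶜ.Finite) (π : ι ≃ ↥s) : Icf ι :=
  ⟨{ toFun := fun a => some ((π a : ι)),
     invFun := fun b => if h : b ∈ s then some (π.symm ⟨b, h⟩) else none,
     inv := fun a b => by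
       by_cases h : b ∈ s
       · simp only [Option.mem_def, dif_pos h]
         constructor
         · intro h2
           have h3 : π.symm ⟨b, h⟩ = a := by injection h2
           rw [← h3, Equiv.apply_symm_apply]
         · intro h2
           have h3 : (π a : ι) = b := by injection h2
           congr 1
           rw [Equiv.symm_apply_eq]
           exact Subtype.ext h3.symm
       · simp only [Option.mem_def, dif_neg h]
         constructor
         · intro h2
           exact absurd h2 (by simp)
         · intro h2
           have h3 : (π a : ι) = b := by injection h2
           exact absurd (h3 ▸ (π a).2) h },
   by
    constructor
    · refine Set.finite_empty.subset fun a ha => ?_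
      rw [Set.mem_setOf_eq] at ha
      cases ha
    · refine hs.subset fun b hb => ?_
      rw [Set.mem_setOf_eq] at hb
      by_contra hbs
      rw [Set.notMem_compl_iff] at hbs
      have hb' : (if h : b ∈ s then some (π.symm ⟨b, h⟩) else none) = none := hb
      rw [dif_pos hbs] at hb'
      cases hb'⟩

lemma emb_coe_apply (s : Set ι) (hs : sᶜ.Finite) (π : ι ≃ ↥s) (a : ι) :
    (emb s hs π).1 a = some ((π a : ι)) := rfl

lemma emb_mul_inv (s : Set ι) (hs : sᶜ.Finite) (π : ι ≃ ↥s) :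
    emb s hs π * inv (emb s hs π) = 1 := by
  rw [mul_inv_self]
  refine (pid_congr ?_ _ univ_compl_finite).trans (pid_univ _)
  refine Set.eq_univ_of_forall fun a => ?_
  simp [domSet, emb_coe_apply]

lemma conj_pid_eq (f : Icf ι) (A T : Set ι) (hA : Aᶜ.Finite) (hT : Tᶜ.Finite)
    (hiff : ∀ x, (∃ y, f.1 x = some y ∧ y ∈ A) ↔ x ∈ T) :
    f * pid A hA * inv f = pid T hT := by
  refine ext' ?_
  rw [mul_coe, mul_coe, pid_coe, inv_coe, pid_coe]
  refine PEquiv.ext fun x => ?_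
  rcases hx : f.1 x with _ | y
  · rw [trans_apply, trans_apply, hx, Option.bind_none, Option.bind_none]
    have hxT : x ∉ T := fun h => by
      obtain ⟨y, hy, _⟩ := (hiff x).2 h
      rw [hx] at hy
      cases hy
    rw [ofSet_apply_not_mem _ hxT]
  · rw [trans_apply, trans_apply, hx, Option.bind_some]
    by_cases hy : y ∈ A
    · rw [ofSet_apply_mem _ hy, Option.bind_some, (PEquiv.eq_some_iff f.1).2 hx,
        ofSet_apply_mem _ ((hiff x).1 ⟨y, hx, hy⟩)]
    · rw [ofSet_apply_not_mem _ hy, Option.bind_none]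
      have hxT : x ∉ T := fun h => by
        obtain ⟨z, hz, hzA⟩ := (hiff x).2 h
        rw [hx] at hz
        cases hz
        exact hy hzA
      rw [ofSet_apply_not_mem _ hxT]

/-- a permutation of `ι` as an element of `Icf`. -/
noncomputable def ofEquiv (σ : ι ≃ ι) : Icf ι :=
  ⟨σ.toPEquiv, by
    constructor
    · refine Set.finite_empty.subset fun a ha => ?_
      rw [Set.mem_setOf_eq, Equiv.toPEquiv_apply] at ha
      cases ha
    · refine Set.finite_empty.subset fun b hb => ?_
      rw [Set.mem_setOf_eq, ← Equiv.toPEquiv_symm, Equiv.toPEquiv_apply] at hb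
      cases hb⟩

lemma ofEquiv_coe_apply (σ : ι ≃ ι) (a : ι) : (ofEquiv σ).1 a = some (σ a) :=
  Equiv.toPEquiv_apply σ a

lemma ofEquiv_mul_inv (σ : ι ≃ ι) : ofEquiv σ * inv (ofEquiv σ) = 1 := by
  rw [mul_inv_self]
  refine (pid_congr ?_ _ univ_compl_finite).trans (pid_univ _)
  refine Set.eq_univ_of_forall fun a => ?_
  simp [domSet, ofEquiv_coe_apply]

lemma pid_singleton_compl_finite (x : ι) : (({x} : Set ι)ᶜ)ᶜ.Finite := by simp

lemma rel_one_singleton {b₀ : ι}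
    (h : c 1 (pid ({b₀} : Set ι)ᶜ (pid_singleton_compl_finite b₀))) (x : ι) :
    c 1 (pid ({x} : Set ι)ᶜ (pid_singleton_compl_finite x)) := by
  set σ := Equiv.swap b₀ x with hσdef
  set f := ofEquiv σ with hfdef
  have h0 : c (f * 1 * inv f) (f * pid ({b₀} : Set ι)ᶜ (pid_singleton_compl_finite b₀) * inv f) :=
    c.mul (c.mul (c.refl f) h) (c.refl (inv f))
  have e1 : f * 1 * inv f = 1 := by rw [mul_one, ofEquiv_mul_inv]
  have e2 : f * pid ({b₀} : Set ι)ᶜ (pid_singleton_compl_finite b₀) * inv f =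
      pid ({x} : Set ι)ᶜ (pid_singleton_compl_finite x) := by
    refine conj_pid_eq f _ _ _ _ fun z => ?_
    constructor
    · rintro ⟨y, hy, hyA⟩
      rw [ofEquiv_coe_apply] at hy
      cases hy
      intro hz
      apply hyA
      have hz' : z = x := hz
      rw [hz', hσdef, Equiv.swap_apply_right]
      exact rfl
    · intro hz
      refine ⟨σ z, ofEquiv_coe_apply σ z, ?_⟩
      intro hσz
      apply hz
      have h1 : σ z = b₀ := hσz
      have h2 := congrArg σ.symm h1
      rw [Equiv.symm_apply_apply] at h2
      rw [h2]
      show σ.symm b₀ ∈ ({x} : Set ι)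
      rw [hσdef, Equiv.symm_swap, Equiv.swap_apply_left]
      exact rfl
  rwa [e1, e2] at h0

lemma rel_one_cofinite
    (hsing : ∀ x : ι, c 1 (pid ({x} : Set ι)ᶜ (pid_singleton_compl_finite x)))
    (F : Set ι) (hF : F.Finite) : ∀ h2 : (Fᶜ : Set ι)ᶜ.Finite, c 1 (pid Fᶜ h2) := by
  refine Set.Finite.induction_on
    (motive := fun F _ => ∀ h2 : (Fᶜ : Set ι)ᶜ.Finite, c 1 (pid Fᶜ h2)) F hF ?_ ?_
  · intro h2
    rw [(pid_congr Set.compl_empty h2 univ_compl_finite : pid _ h2 = _), pid_univ]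
    exact c.refl 1
  · intro a s ha hs ih h2
    have hsc : (sᶜ : Set ι)ᶜ.Finite := by simpa using hs
    have h3 := c.mul (ih hsc) (hsing a)
    rw [one_mul, pid_mul_pid] at h3
    have hset : sᶜ ∩ ({a} : Set ι)ᶜ = (insert a s)ᶜ := by
      rw [Set.insert_eq, Set.compl_union, Set.inter_comm]
    rwa [(pid_congr hset _ h2 : pid _ _ = _)] at h3

lemma rel_one_pid [Infinite ι] (hne_id : ∃ α β : Icf ι, c α β ∧ α ≠ β)
    (S : Set ι) (hS : Sᶜ.Finite) : c 1 (pid S hS) := by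
  obtain ⟨M, p, hM, hMp, hpM, hrel⟩ := exists_pid_insert hne_id
  obtain ⟨π⟩ := exists_equiv_of_cofinite (M ∪ {p}) hMp
  set f := emb (M ∪ {p}) hMp π with hfdef
  have hps : p ∈ M ∪ {p} := Or.inr rfl
  set b₀ := π.symm ⟨p, hps⟩ with hb₀def
  have h0 : c (f * pid (M ∪ {p}) hMp * inv f) (f * pid M hM * inv f) :=
    c.mul (c.mul (c.refl f) hrel) (c.refl (inv f))
  have e1 : f * pid (M ∪ {p}) hMp * inv f = 1 := by
    have hstep : f * pid (M ∪ {p}) hMp = f := by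
      refine ext' ?_
      rw [mul_coe, pid_coe]
      refine trans_ofSet_of _ fun x y hxy => ?_
      have h3 : (π x : ι) = y := by
        rw [emb_coe_apply] at hxy
        injection hxy
      exact h3 ▸ (π x).2
    rw [hstep, hfdef, emb_mul_inv]
  have e2 : f * pid M hM * inv f =
      pid ({b₀} : Set ι)ᶜ (pid_singleton_compl_finite b₀) := by
    refine conj_pid_eq f _ _ _ _ fun z => ?_
    constructor
    · rintro ⟨y, hy, hyM⟩
      rw [emb_coe_apply] at hy
      cases hy
      intro hz
      have hz' : z = b₀ := hz
      rw [hz', hb₀def, Equiv.apply_symm_apply] at hyM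
      exact hpM hyM
    · intro hz
      refine ⟨(π z : ι), emb_coe_apply _ _ π z, ?_⟩
      rcases (π z).2 with hmem | hmem
      · exact hmem
      · exfalso
        apply hz
        have h4 : π z = ⟨p, hps⟩ := Subtype.ext hmem
        have h5 := congrArg π.symm h4
        rw [Equiv.symm_apply_apply] at h5
        exact h5
  rw [e1, e2] at h0
  have hsing := rel_one_singleton h0
  have hcof := rel_one_cofinite hsing Sᶜ (by simpa using hS)
  have := hcof (by simpa using hS)
  rwa [(pid_congr (compl_compl S) _ hS : pid Sᶜᶜ _ = _)] at this

end Congr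

end Icf

/-- Every non-trivial congruence on `Icf ι` is a group congruence. -/
theorem statement14 {ι : Type*} [Infinite ι] (c : Con (Icf ι))
    (hne_id : ∃ α β : Icf ι, c α β ∧ α ≠ β)
    (hne_univ : ∃ α β : Icf ι, ¬ c α β) :
    ∀ x : c.Quotient, ∃ y : c.Quotient, x * y = 1 ∧ y * x = 1 := by
  intro x
  refine Con.induction_on x fun α => ?_
  refine ⟨↑(Icf.inv α), ?_, ?_⟩
  · rw [← Con.coe_mul, ← Con.coe_one, Con.eq, Icf.mul_inv_self]
    exact c.symm (Icf.rel_one_pid hne_id _ _)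
  · rw [← Con.coe_mul, ← Con.coe_one, Con.eq, Icf.inv_mul_self]
    exact c.symm (Icf.rel_one_pid hne_id _ _)

end IcfPaper
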